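/- For integers 1 ≤ s ≤ t and t ≤ n ≤ s + t - 1, one has ∑_{i=0}^{s} (-1)^i * (C(s,i) * C(t,i) / C(n,i)) = 0. -/

import Mathlib

open Finset

lemma gauss_aux : ∀ (t s n : ℕ), t ≤ n →
    (∑ i ∈ Finset.range (s + 1),
      (-1 : ℚ) ^ i * (t.choose i : ℚ) * ((n - i).choose (s - i) : ℚ))
      = ((n - t).choose s : ℚ) := by
  intro t
  induction t with
  | zero =>
    intro s n _
    rw [Finset.sum_eq_single 0]
    · simp
    · intro i _ hi
      obtain ⟨j, rfl⟩ := Nat.exists_eq_succ_of_ne_zero hi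
      simp [Nat.choose]
    · simp
  | succ t ih =>
    intro s n hn
    have ht : t ≤ n - 1 := Nat.le_sub_one_of_lt hn
    match s with
    | 0 => simp
    | s + 1 =>
      rw [Finset.sum_range_succ']
      have key : ∀ i : ℕ, (-1 : ℚ) ^ (i+1) * ((t+1).choose (i+1) : ℚ) * ((n - (i+1)).choose (s + 1 - (i+1)) : ℚ)
          = (-1 : ℚ) ^ (i+1) * ((t).choose (i+1) : ℚ) * ((n - (i+1)).choose (s + 1 - (i+1)) : ℚ)
            - (-1 : ℚ) ^ i * ((t).choose i : ℚ) * ((n - 1 - i).choose (s - i) : ℚ) := by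
        intro i
        have : n - (i + 1) = n - 1 - i := by omega
        rw [Nat.choose_succ_succ, this]
        push_cast
        ring
      simp only [key, Finset.sum_sub_distrib]
      rw [ih s (n-1) ht]
      have h2 : (∑ i ∈ Finset.range (s + 1),
          (-1 : ℚ) ^ (i+1) * ((t).choose (i+1) : ℚ) * ((n - (i+1)).choose (s + 1 - (i+1)) : ℚ))
          + (-1 : ℚ) ^ 0 * ((t+1).choose 0 : ℚ) * ((n - 0).choose (s + 1 - 0) : ℚ)
          = ((n - t).choose (s+1) : ℚ) := by
        rw [← ih (s+1) n (Nat.le_of_succ_le hn)]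
        conv_rhs => rw [Finset.sum_range_succ']
        congr 1
        norm_num
      have h3 : n - t = (n - (t+1)) + 1 := by omega
      have h4 : n - 1 - t = n - (t + 1) := by omega
      rw [sub_add_eq_add_sub, h2, h3, h4, Nat.choose_succ_succ]
      push_cast
      ring

theorem gauss_case_two (s t n : ℕ) (hs : 1 ≤ s) (hst : s ≤ t) (htn : t ≤ n)
    (h : n ≤ s + t - 1) :
    ∑ i ∈ Finset.range (s + 1),
        (-1 : ℚ) ^ i * ((s.choose i : ℚ) * (t.choose i) / (n.choose i)) = 0 := by
  have hsn : s ≤ n := hst.trans htn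
  have hns : (n.choose s : ℚ) ≠ 0 := by
    exact_mod_cast (Nat.choose_pos hsn).ne'
  have step : ∀ i ∈ Finset.range (s + 1),
      (-1 : ℚ) ^ i * ((s.choose i : ℚ) * (t.choose i) / (n.choose i))
      = ((-1 : ℚ) ^ i * (t.choose i : ℚ) * ((n - i).choose (s - i) : ℚ)) / (n.choose s : ℚ) := by
    intro i hi
    have his : i ≤ s := Nat.lt_succ_iff.mp (Finset.mem_range.mp hi)
    have hni : (n.choose i : ℚ) ≠ 0 :=
      by exact_mod_cast (Nat.choose_pos (his.trans hsn)).ne'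
    have key : (n.choose s : ℚ) * (s.choose i : ℚ) = (n.choose i : ℚ) * ((n - i).choose (s - i) : ℚ) := by
      exact_mod_cast congrArg (Nat.cast : ℕ → ℚ) (Nat.choose_mul his : n.choose s * s.choose i = n.choose i * (n - i).choose (s - i))
    field_simp
    linear_combination (t.choose i : ℚ) * key
  rw [Finset.sum_congr rfl step, ← Finset.sum_div, gauss_aux t s n htn]
  have : n - t < s := by omega
  rw [Nat.choose_eq_zero_of_lt this]
  simp
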